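/- Coherent states are joint eigenfunctions of invariant differentiation: if F is a conjugation-invariant polynomial on M_n(ℂ) and Q_a(z) = ∫_{U(n)} e^{Tr(u⁻¹ z u a*)} du, then F(∂/∂z) Q_a = F(conj(a)) Q_a for every a ∈ M_n(ℂ). -/

import Mathlib

open MvPolynomial MeasureTheory

attribute [local instance] Matrix.normedAddCommGroup Matrix.normedSpace

noncomputable instance unitaryGroupMeasurableSpace (n : ℕ) :
    MeasurableSpace (Matrix.unitaryGroup (Fin n) ℂ) := borel _

open scoped Matrix

instance (n : ℕ) : BorelSpace (Matrix.unitaryGroup (Fin n) ℂ) := ⟨rfl⟩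

/-- The partial derivative `∂/∂z_{ij}` of a function on `M_n(ℂ)`. -/
noncomputable def pdM {n : ℕ} (p : Fin n × Fin n)
    (f : Matrix (Fin n) (Fin n) ℂ → ℂ) : Matrix (Fin n) (Fin n) ℂ → ℂ :=
  fun z => fderiv ℂ f z (Matrix.single p.1 p.2 1)

/-- The differential operator `∂^μ = ∏_{ij} (∂/∂z_{ij})^(μ ij)` on functions on `M_n(ℂ)`. -/
noncomputable def diffOpM {n : ℕ} (μ : (Fin n × Fin n) →₀ ℕ) :
    (Matrix (Fin n) (Fin n) ℂ → ℂ) → (Matrix (Fin n) (Fin n) ℂ → ℂ) :=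
  (Finset.univ.toList : List (Fin n × Fin n)).foldr (fun p acc => (pdM p)^[μ p] ∘ acc) id

/-- `F(∂/∂z)` applied to a function on `M_n(ℂ)`, for a polynomial `F = Σ c_μ z^μ`. -/
noncomputable def applyDiffM {n : ℕ} (F : MvPolynomial (Fin n × Fin n) ℂ)
    (f : Matrix (Fin n) (Fin n) ℂ → ℂ) (z : Matrix (Fin n) (Fin n) ℂ) : ℂ :=
  (AddMonoidAlgebra.coeff F).sum fun μ c => c * diffOpM μ f z

/-- Evaluation of a polynomial on `M_n(ℂ)` at a matrix. -/
noncomputable def evalMat {n : ℕ} (F : MvPolynomial (Fin n × Fin n) ℂ)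
    (m : Matrix (Fin n) (Fin n) ℂ) : ℂ :=
  eval (fun p : Fin n × Fin n => m p.1 p.2) F

set_option maxHeartbeats 1000000
set_option synthInstance.maxHeartbeats 1000000

namespace CSAux

variable {n : ℕ}

abbrev M (n : ℕ) := Matrix (Fin n) (Fin n) ℂ
abbrev U (n : ℕ) := Matrix.unitaryGroup (Fin n) ℂ

-- compactness of the unitary group
instance : CompactSpace (U n) := by
  suffices h : IsCompact (Matrix.unitaryGroup (Fin n) ℂ : Set (M n)) by
    exact isCompact_iff_compactSpace.mp h
  have hclosed : IsClosed (Matrix.unitaryGroup (Fin n) ℂ : Set (M n)) := by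
    have h1 : Continuous fun A : M n => (star A * A, A * star A) := by
      exact ((continuous_star.mul continuous_id).prodMk (continuous_id.mul continuous_star))
    have : (Matrix.unitaryGroup (Fin n) ℂ : Set (M n)) =
        (fun A : M n => (star A * A, A * star A)) ⁻¹' {((1 : M n), (1 : M n))} := by
      ext A
      simp only [Set.mem_preimage, Set.mem_singleton_iff, Prod.mk.injEq, SetLike.mem_coe,
        Unitary.mem_iff]
    rw [this]
    exact isClosed_singleton.preimage h1
  have hbdd : Bornology.IsBounded (Matrix.unitaryGroup (Fin n) ℂ : Set (M n)) := by
    apply Bornology.IsBounded.subset (Metric.isBounded_closedBall (x := (0 : M n)) (r := 1))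
    intro A hA
    simpa [Metric.mem_closedBall] using entrywise_sup_norm_bound_of_unitary hA
  exact Metric.isCompact_of_isClosed_isBounded hclosed hbdd

end CSAux

namespace CSAux

variable {n : ℕ}

/-- the norm topology on `M n` -/
noncomputable abbrev instTopM (n : ℕ) : TopologicalSpace (M n) :=
  (inferInstance : PseudoMetricSpace (M n)).toUniformSpace.toTopologicalSpace

instance instTopMContMul (n : ℕ) : @ContinuousMul (M n) (instTopM n) _ :=
  (inferInstance : ContinuousMul (M n))

instance instTopMContStar (n : ℕ) : @ContinuousStar (M n) (instTopM n) _ :=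
  (inferInstance : ContinuousStar (M n))

attribute [local instance] instTopM

/-- map `B ↦ (z ↦ trace (z * B))` as a bundled linear map into CLMs -/
noncomputable def Phi (n : ℕ) : M n →ₗ[ℂ] (M n →L[ℂ] ℂ) where
  toFun B := LinearMap.toContinuousLinearMap
    { toFun := fun z => (z * B).trace
      map_add' := fun x y => by simp [Matrix.add_mul]
      map_smul' := fun c x => by simp [Matrix.smul_mul] }
  map_add' B C := by
    ext z
    simp [Matrix.mul_add]
  map_smul' c B := by
    ext z
    simp [Matrix.mul_smul]

@[simp] lemma Phi_apply (B z : M n) : Phi n B z = (z * B).trace := rfl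

lemma Phi_cont : Continuous (Phi n) := (Phi n).continuous_of_finiteDimensional

/-- B(u) = u a* u⁻¹ -/
noncomputable def Bm (a : M n) (u : U n) : M n :=
  (↑u : M n) * a.conjTranspose * (↑(u⁻¹) : M n)

lemma Bm_cont (a : M n) : Continuous (Bm a) := by
  have h1 : Continuous fun u : U n => (↑u : M n) := continuous_subtype_val
  have h2 : Continuous fun u : U n => (↑(u⁻¹) : M n) := by
    simpa [Matrix.UnitaryGroup.inv_val] using h1.star
  exact (h1.mul continuous_const).mul h2

/-- the continuous linear form z ↦ Tr(u⁻¹ z u a*) -/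
noncomputable def Lc (a : M n) (u : U n) : M n →L[ℂ] ℂ := Phi n (Bm a u)

lemma Lc_cont (a : M n) : Continuous (Lc a) := Phi_cont.comp (Bm_cont a)

lemma Lc_eq_trace (a : M n) (u : U n) (z : M n) :
    Lc a u z = ((↑(u⁻¹) : M n) * z * (↑u : M n) * a.conjTranspose).trace := by
  show (z * ((↑u : M n) * a.conjTranspose * (↑(u⁻¹) : M n))).trace = _
  rw [show (↑(u⁻¹) : M n) * z * (↑u : M n) * a.conjTranspose
      = (↑(u⁻¹) : M n) * (z * ((↑u : M n) * a.conjTranspose)) by noncomm_ring]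
  rw [Matrix.trace_mul_comm ((↑(u⁻¹) : M n)) (z * ((↑u : M n) * a.conjTranspose))]
  congr 1
  noncomm_ring

end CSAux

namespace CSAux

variable {n : ℕ}

lemma trace_std_mul (B : M n) (i j : Fin n) :
    ((Matrix.single i j (1:ℂ)) * B).trace = B j i := by
  simp [Matrix.trace, Matrix.diag, Matrix.mul_apply, Matrix.single, ite_and,
    Finset.sum_ite_eq]

lemma Lc_std (a : M n) (u : U n) (p : Fin n × Fin n) :
    Lc a u (Matrix.single p.1 p.2 1) = Bm a u p.2 p.1 := by
  show ((Matrix.single p.1 p.2 (1:ℂ)) * Bm a u).trace = _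
  exact trace_std_mul _ _ _

/-- entrywise bound for Bm -/
lemma Bm_entry_bound (a : M n) (u : U n) (i j : Fin n) :
    ‖Bm a u i j‖ ≤ ∑ k : Fin n, ∑ l : Fin n, ‖a l k‖ := by
  have hu : ∀ i j, ‖(↑u : M n) i j‖ ≤ 1 := fun i j => entry_norm_bound_of_unitary u.2 i j
  have hui : ∀ i j, ‖(↑(u⁻¹) : M n) i j‖ ≤ 1 := fun i j =>
    entry_norm_bound_of_unitary (u⁻¹).2 i j
  calc ‖Bm a u i j‖ = ‖∑ l : Fin n, (∑ k : Fin n, (↑u : M n) i k * a.conjTranspose k l)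
        * (↑(u⁻¹) : M n) l j‖ := by
        simp [Bm, Matrix.mul_apply]
    _ ≤ ∑ l : Fin n, ∑ k : Fin n, ‖(↑u : M n) i k * a.conjTranspose k l
        * (↑(u⁻¹) : M n) l j‖ := by
        refine (norm_sum_le _ _).trans ?_
        refine Finset.sum_le_sum fun l _ => ?_
        rw [Finset.sum_mul]
        exact norm_sum_le _ _
    _ ≤ ∑ l : Fin n, ∑ k : Fin n, ‖a l k‖ := by
        refine Finset.sum_le_sum fun l _ => Finset.sum_le_sum fun k _ => ?_
        rw [norm_mul, norm_mul]
        have h1 : ‖a.conjTranspose k l‖ = ‖a l k‖ := by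
          simp [Matrix.conjTranspose_apply]
        calc ‖(↑u : M n) i k‖ * ‖a.conjTranspose k l‖ * ‖(↑(u⁻¹) : M n) l j‖
            ≤ 1 * ‖a.conjTranspose k l‖ * 1 := by
              gcongr <;> [exact hu i k; exact hui l j]
          _ = ‖a l k‖ := by rw [h1]; ring
    _ = ∑ k : Fin n, ∑ l : Fin n, ‖a l k‖ := by rw [Finset.sum_comm]

end CSAux

namespace CSAux

variable {n : ℕ}

/-- uniform bound constant -/
noncomputable def Cb (n : ℕ) (a : M n) : ℝ :=
  (Finset.univ (α := Fin n × Fin n)).card * (∑ k : Fin n, ∑ l : Fin n, ‖a l k‖)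

lemma Cb_nonneg (a : M n) : 0 ≤ Cb n a := by
  apply mul_nonneg (Nat.cast_nonneg _)
  exact Finset.sum_nonneg fun k _ => Finset.sum_nonneg fun l _ => norm_nonneg _

lemma Lc_apply_bound (a : M n) (u : U n) (z : M n) :
    ‖Lc a u z‖ ≤ Cb n a * ‖z‖ := by
  have hz : Lc a u z = (z * Bm a u).trace := rfl
  have : (z * Bm a u).trace = ∑ i : Fin n, ∑ j : Fin n, z i j * Bm a u j i := by
    simp [Matrix.trace, Matrix.diag, Matrix.mul_apply]
  rw [hz, this]
  calc ‖∑ i : Fin n, ∑ j : Fin n, z i j * Bm a u j i‖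
      ≤ ∑ i : Fin n, ∑ j : Fin n, ‖z i j * Bm a u j i‖ := by
        refine (norm_sum_le _ _).trans (Finset.sum_le_sum fun i _ => norm_sum_le _ _)
    _ ≤ ∑ i : Fin n, ∑ j : Fin n, ‖z‖ * (∑ k : Fin n, ∑ l : Fin n, ‖a l k‖) := by
        refine Finset.sum_le_sum fun i _ => Finset.sum_le_sum fun j _ => ?_
        rw [norm_mul]
        exact mul_le_mul (Matrix.norm_entry_le_entrywise_sup_norm z)
          (Bm_entry_bound a u j i) (norm_nonneg _) (norm_nonneg _)
    _ = Cb n a * ‖z‖ := by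
        simp only [Finset.sum_const, nsmul_eq_mul, Cb, Finset.card_univ, Fintype.card_prod,
          Fintype.card_fin]
        push_cast
        ring

lemma Lc_norm_bound (a : M n) (u : U n) : ‖Lc a u‖ ≤ Cb n a :=
  ContinuousLinearMap.opNorm_le_bound _ (Cb_nonneg a) (Lc_apply_bound a u)

end CSAux

namespace CSAux

variable {n : ℕ}

lemma integrable_cont {E : Type*} [NormedAddCommGroup E] (μ : Measure (U n))
    [IsFiniteMeasure μ] {f : U n → E} (hf : Continuous f) : Integrable f μ := by
  have h : HasCompactSupport f :=
    IsCompact.of_isClosed_subset isCompact_univ (isClosed_tsupport f) (Set.subset_univ _)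
  exact hf.integrable_of_hasCompactSupport h

lemma cont_eval (a : M n) (z : M n) : Continuous fun u : U n => Lc a u z :=
  (ContinuousLinearMap.apply ℂ ℂ z).continuous.comp (Lc_cont a)

lemma cont_integrand (a : M n) (c : U n → ℂ) (hc : Continuous c) (z : M n) :
    Continuous fun u : U n => c u * Complex.exp (Lc a u z) :=
  hc.mul (Complex.continuous_exp.comp (cont_eval a z))

lemma hasFDerivAt_int (μ : Measure (U n)) [IsFiniteMeasure μ] (a : M n)
    (c : U n → ℂ) (hc : Continuous c) (z₀ : M n) :
    HasFDerivAt (fun z => ∫ u, c u * Complex.exp (Lc a u z) ∂μ)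
      (∫ u, (c u * Complex.exp (Lc a u z₀)) • Lc a u ∂μ) z₀ := by
  obtain ⟨Cc, hCc⟩ : ∃ Cc, ∀ u : U n, ‖c u‖ ≤ Cc := by
    obtain ⟨Cc, hCc⟩ := isCompact_univ.exists_bound_of_continuousOn hc.continuousOn
    exact ⟨Cc, fun u => hCc u (Set.mem_univ u)⟩
  have hCc0 : 0 ≤ Cc := le_trans (norm_nonneg _) (hCc default)
  apply hasFDerivAt_integral_of_dominated_of_fderiv_le
    (F' := fun z u => (c u * Complex.exp (Lc a u z)) • Lc a u)
    (bound := fun _ => Cc * Real.exp (Cb n a * (‖z₀‖ + 1)) * Cb n a)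
    (s := Metric.ball z₀ 1) (Metric.ball_mem_nhds z₀ one_pos)
  · filter_upwards with z
    exact (cont_integrand a c hc z).aestronglyMeasurable
  · exact integrable_cont μ (cont_integrand a c hc z₀)
  · exact (((cont_integrand a c hc z₀)).smul (Lc_cont a)).aestronglyMeasurable
  · filter_upwards with u
    intro x hx
    rw [norm_smul (c u * Complex.exp ((Lc a u) x)) (Lc a u), norm_mul, Complex.norm_exp]
    have hre : (Lc a u x).re ≤ Cb n a * (‖z₀‖ + 1) := by
      calc (Lc a u x).re ≤ ‖Lc a u x‖ := Complex.re_le_norm _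
        _ = ‖Lc a u x‖ := rfl
        _ ≤ Cb n a * ‖x‖ := Lc_apply_bound a u x
        _ ≤ Cb n a * (‖z₀‖ + 1) := by
            refine mul_le_mul_of_nonneg_left ?_ (Cb_nonneg a)
            have := mem_ball_iff_norm.mp hx
            have h2 : ‖x‖ ≤ ‖x - z₀‖ + ‖z₀‖ := by simpa using norm_add_le (x - z₀) z₀
            linarith
    have hfin : ‖c u‖ * Real.exp (Lc a u x).re * ‖Lc a u‖ ≤ Cc * Real.exp (Cb n a * (‖z₀‖ + 1)) * Cb n a := by
      gcongr
      · exact hCc u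
      · exact Lc_norm_bound a u
    exact hfin
  · exact integrable_const _
  · filter_upwards with u
    intro x hx
    have h1 : HasFDerivAt (fun z => Complex.exp (Lc a u z))
        (Complex.exp (Lc a u x) • Lc a u) x :=
      (Complex.hasDerivAt_exp (Lc a u x)).comp_hasFDerivAt x (Lc a u).hasFDerivAt
    have h2 := h1.const_mul (c u)
    rw [smul_smul] at h2
    exact h2

end CSAux

namespace CSAux

variable {n : ℕ}

lemma Bm_entry_cont (a : M n) (i j : Fin n) : Continuous fun u : U n => Bm a u i j :=
  by exact (continuous_apply j).comp ((continuous_apply i).comp (Bm_cont a))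

lemma pd_int (μ : Measure (U n)) [IsFiniteMeasure μ] (a : M n) (c : U n → ℂ)
    (hc : Continuous c) (p : Fin n × Fin n) :
    pdM p (fun z => ∫ u, c u * Complex.exp (Lc a u z) ∂μ) =
      fun z => ∫ u, (c u * Bm a u p.2 p.1) * Complex.exp (Lc a u z) ∂μ := by
  funext z
  have h := hasFDerivAt_int μ a c hc z
  show fderiv ℂ _ z _ = _
  erw [h.fderiv]
  have hint : Integrable (fun u => (c u * Complex.exp (Lc a u z)) • Lc a u) μ :=
    integrable_cont μ ((cont_integrand a c hc z).smul (Lc_cont a))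
  erw [ContinuousLinearMap.integral_apply hint]
  congr 1
  funext u
  simp only [ContinuousLinearMap.smul_apply, smul_eq_mul, Lc_std]
  ring

lemma pd_iter (μ : Measure (U n)) [IsFiniteMeasure μ] (a : M n) (c : U n → ℂ)
    (hc : Continuous c) (p : Fin n × Fin n) (k : ℕ) :
    (pdM p)^[k] (fun z => ∫ u, c u * Complex.exp (Lc a u z) ∂μ) =
      fun z => ∫ u, (c u * Bm a u p.2 p.1 ^ k) * Complex.exp (Lc a u z) ∂μ := by
  induction k with
  | zero => simp only [Function.iterate_zero, id_eq, pow_zero, mul_one]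
  | succ k ih =>
    rw [Function.iterate_succ_apply', ih,
      pd_int μ a (fun u => c u * Bm a u p.2 p.1 ^ k) (hc.mul ((Bm_entry_cont a p.2 p.1).pow k)) p]
    funext z
    congr 1
    funext u
    ring

lemma cont_listprod (a : M n) (ν : (Fin n × Fin n) →₀ ℕ) (l : List (Fin n × Fin n)) :
    Continuous fun u : U n => (l.map (fun p => Bm a u p.2 p.1 ^ ν p)).prod := by
  induction l with
  | nil => simpa using continuous_const
  | cons p l ih =>
    simp only [List.map_cons, List.prod_cons]
    exact ((Bm_entry_cont a p.2 p.1).pow (ν p)).mul ih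

lemma fold_int (μ : Measure (U n)) [IsFiniteMeasure μ] (a : M n)
    (ν : (Fin n × Fin n) →₀ ℕ) (l : List (Fin n × Fin n)) (c : U n → ℂ) (hc : Continuous c) :
    (l.foldr (fun p acc => (pdM p)^[ν p] ∘ acc) id)
        (fun z => ∫ u, c u * Complex.exp (Lc a u z) ∂μ) =
      fun z => ∫ u, (c u * (l.map (fun p => Bm a u p.2 p.1 ^ ν p)).prod) *
        Complex.exp (Lc a u z) ∂μ := by
  induction l with
  | nil => simp only [List.foldr_nil, id_eq, List.map_nil, List.prod_nil, mul_one]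
  | cons p l ih =>
    simp only [List.foldr_cons, Function.comp_apply, ih]
    rw [pd_iter μ a (fun u => c u * (l.map (fun p => Bm a u p.2 p.1 ^ ν p)).prod)
      (hc.mul (cont_listprod a ν l)) p (ν p)]
    funext z
    congr 1
    funext u
    simp only [List.map_cons, List.prod_cons]
    ring

end CSAux

namespace CSAux

variable {n : ℕ}

lemma fold_int_one (μ : Measure (U n)) [IsFiniteMeasure μ] (a : M n)
    (ν : (Fin n × Fin n) →₀ ℕ) :
    ((Finset.univ.toList : List (Fin n × Fin n)).foldr
        (fun p acc => (pdM p)^[ν p] ∘ acc) id)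
        (fun z => ∫ u, Complex.exp (Lc a u z) ∂μ) =
      fun z => ∫ u, ((Finset.univ.toList.map
          (fun p : Fin n × Fin n => Bm a u p.2 p.1 ^ ν p)).prod) *
        Complex.exp (Lc a u z) ∂μ := by
  have h := fold_int μ a ν Finset.univ.toList (fun _ => (1:ℂ)) continuous_const
  simpa using h

lemma eval_Bm_eq (F : MvPolynomial (Fin n × Fin n) ℂ)
    (hF : ∀ g : Matrix.GeneralLinearGroup (Fin n) ℂ, ∀ z : M n,
      evalMat F ((↑(g⁻¹) : M n) * z * (↑g : M n)) = evalMat F z)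
    (a : M n) (u : U n) :
    eval (fun p : Fin n × Fin n => Bm a u p.2 p.1) F =
      eval (fun p : Fin n × Fin n => (starRingEnd ℂ) (a p.1 p.2)) F := by
  have h1 : (↑u : M n)ᵀ * ((↑u : M n)ᴴ)ᵀ = 1 := by
    rw [← Matrix.transpose_mul]
    rw [show (↑u : M n)ᴴ * (↑u : M n) = 1 from u.2.1]
    exact Matrix.transpose_one
  have h2 : ((↑u : M n)ᴴ)ᵀ * (↑u : M n)ᵀ = 1 := by
    rw [← Matrix.transpose_mul]
    rw [show (↑u : M n) * (↑u : M n)ᴴ = 1 from u.2.2]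
    exact Matrix.transpose_one
  set g : Matrix.GeneralLinearGroup (Fin n) ℂ := ⟨(↑u : M n)ᵀ, ((↑u : M n)ᴴ)ᵀ, h1, h2⟩ with hg
  have hmat : (↑(g⁻¹) : M n) * (a.conjTranspose)ᵀ * (↑g : M n) = (Bm a u)ᵀ := by
    show ((↑u : M n)ᴴ)ᵀ * (a.conjTranspose)ᵀ * (↑u : M n)ᵀ = _
    rw [show Bm a u = (↑u : M n) * a.conjTranspose * (↑u : M n)ᴴ from rfl]
    simp [Matrix.transpose_mul, mul_assoc]
  calc eval (fun p : Fin n × Fin n => Bm a u p.2 p.1) F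
      = evalMat F ((Bm a u)ᵀ) := by
        unfold evalMat
        congr 1
    _ = evalMat F ((↑(g⁻¹) : M n) * (a.conjTranspose)ᵀ * (↑g : M n)) := by rw [hmat]
    _ = evalMat F ((a.conjTranspose)ᵀ) := hF g _
    _ = eval (fun p : Fin n × Fin n => (starRingEnd ℂ) (a p.1 p.2)) F := by
        unfold evalMat
        congr 1

end CSAux

open CSAux

/-- Coherent states are joint eigenfunctions of invariant differentiation: for a
conjugation-invariant polynomial `F` on `M_n(ℂ)` and the projected coherent state
`Q_a(z) = ∫_{U(n)} e^{Tr(u⁻¹ z u a*)} du`, one has `F(∂/∂z) Q_a = F(conj a) Q_a`. -/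
theorem invariant_diff_coherent_state (n : ℕ)
    (μ : Measure (Matrix.unitaryGroup (Fin n) ℂ))
    [μ.IsHaarMeasure] [IsProbabilityMeasure μ]
    (F : MvPolynomial (Fin n × Fin n) ℂ)
    (hF : ∀ g : Matrix.GeneralLinearGroup (Fin n) ℂ, ∀ z : Matrix (Fin n) (Fin n) ℂ,
      evalMat F ((↑(g⁻¹) : Matrix (Fin n) (Fin n) ℂ) * z * (↑g : Matrix (Fin n) (Fin n) ℂ)) =
        evalMat F z)
    (Q : Matrix (Fin n) (Fin n) ℂ → Matrix (Fin n) (Fin n) ℂ → ℂ)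
    (hQ : ∀ a z, Q a z = ∫ u : Matrix.unitaryGroup (Fin n) ℂ,
      Complex.exp (((↑(u⁻¹) : Matrix (Fin n) (Fin n) ℂ) * z *
        (↑u : Matrix (Fin n) (Fin n) ℂ) * Matrix.conjTranspose a).trace) ∂μ) :
    ∀ a z, applyDiffM F (Q a) z =
      eval (fun p : Fin n × Fin n => (starRingEnd ℂ) (a p.1 p.2)) F * Q a z := by
  intro a z
  have hQfun : Q a = fun z => ∫ u, Complex.exp (Lc a u z) ∂μ := by
    funext w
    rw [hQ]
    congr 1
    funext u
    rw [Lc_eq_trace]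
  have hdiff : ∀ ν : (Fin n × Fin n) →₀ ℕ, diffOpM ν (Q a) z =
      ∫ u, ((Finset.univ.toList.map
          (fun p : Fin n × Fin n => Bm a u p.2 p.1 ^ ν p)).prod) *
        Complex.exp (Lc a u z) ∂μ := by
    intro ν
    unfold diffOpM
    rw [hQfun, fold_int_one μ a ν]
  calc applyDiffM F (Q a) z
      = ∑ ν ∈ F.support, MvPolynomial.coeff ν F * diffOpM ν (Q a) z := rfl
    _ = ∑ ν ∈ F.support, ∫ u, (MvPolynomial.coeff ν F * (Finset.univ.toList.map
          (fun p : Fin n × Fin n => Bm a u p.2 p.1 ^ ν p)).prod) *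
          Complex.exp (Lc a u z) ∂μ := by
        refine Finset.sum_congr rfl fun ν _ => ?_
        rw [hdiff ν, ← integral_const_mul]
        congr 1
        funext u
        ring
    _ = ∫ u, ∑ ν ∈ F.support, (MvPolynomial.coeff ν F * (Finset.univ.toList.map
          (fun p : Fin n × Fin n => Bm a u p.2 p.1 ^ ν p)).prod) *
          Complex.exp (Lc a u z) ∂μ := by
        rw [← integral_finset_sum]
        intro ν _
        exact integrable_cont μ (((continuous_const.mul (cont_listprod a ν _)).mul
          (Complex.continuous_exp.comp (cont_eval a z))))
    _ = ∫ u, (eval (fun p : Fin n × Fin n => Bm a u p.2 p.1) F) *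
          Complex.exp (Lc a u z) ∂μ := by
        congr 1
        funext u
        rw [eval_eq', Finset.sum_mul]
        refine Finset.sum_congr rfl fun ν _ => ?_
        rw [Finset.prod_map_toList]
    _ = ∫ u, (eval (fun p : Fin n × Fin n => (starRingEnd ℂ) (a p.1 p.2)) F) *
          Complex.exp (Lc a u z) ∂μ := by
        congr 1
        funext u
        rw [eval_Bm_eq F hF a u]
    _ = eval (fun p : Fin n × Fin n => (starRingEnd ℂ) (a p.1 p.2)) F * Q a z := by
        rw [integral_const_mul, hQfun]
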